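/- The point spectrum of U(s,r,s) on bv_p is empty for 1 < p < ∞ when s ≠ 0: the equation U(s,r,s)x = λx has no nonzero solution x ∈ bv_p for any λ ∈ ℂ. -/

import Mathlib

open scoped ENNReal
open Real Set

open Filter

/-- The tridiagonal operator U(s,r,s) acting on sequences, with x_{-1} = 0. -/
noncomputable def Ufun (s r : ℂ) (x : ℕ → ℂ) : ℕ → ℂ :=
  fun k => (if k = 0 then 0 else s * x (k - 1)) + r * x k + s * x (k + 1)

/-- The backward difference (Δ x)_k = x_k − x_{k−1}, with x_{-1} = 0. -/
noncomputable def dL (x : ℕ → ℂ) : ℕ → ℂ :=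
  fun k => x k - (if k = 0 then 0 else x (k - 1))

noncomputable def cheb (t : ℂ) : ℕ → ℂ
  | 0 => 1
  | 1 => t
  | (n+2) => t * cheb t (n+1) - cheb t n

lemma cheb_closed {α β : ℂ} (hprod : α * β = 1) (k : ℕ) :
    (α - β) * cheb (α + β) k = α ^ (k+1) - β ^ (k+1) := by
  induction k using Nat.twoStepInduction with
  | zero => simp [cheb]
  | one => simp [cheb]; ring
  | more n h1 h2 =>
    simp only [cheb]
    linear_combination (α + β) * h2 - h1 + (α ^ (n+1) - β ^ (n+1)) * hprod

lemma cheb_deg {α : ℂ} (hprod : α * α = 1) (k : ℕ) :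
    cheb (α + α) k = (k + 1 : ℂ) * α ^ k := by
  induction k using Nat.twoStepInduction with
  | zero => simp [cheb]
  | one => simp [cheb]; ring
  | more n h1 h2 =>
    simp only [cheb, h1, h2]
    push_cast
    linear_combination ((n : ℂ) + 1) * α ^ n * hprod

lemma no_tendsto_zero {g : ℕ → ℂ} {c : ℝ} (hc : 0 < c) (hb : ∀ k, c ≤ ‖g k‖)
    (h : Filter.Tendsto g atTop (nhds 0)) : False := by
  have h2 : Filter.Tendsto (fun k => ‖g k‖) atTop (nhds 0) := by
    simpa using h.norm
  obtain ⟨k, hk⟩ := (h2.eventually (gt_mem_nhds hc)).exists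
  exact absurd (hb k) (not_le.mpr hk)

/-- The point spectrum of U(s,r,s) on bv_p is empty: U x = λ x has no nonzero
solution x ∈ bv_p. -/
theorem stmt17 (s r : ℂ) (hs : s ≠ 0) (p : ℝ≥0∞) (hp : 1 < p) (hp' : p ≠ ∞)
    (lam : ℂ) (x : ℕ → ℂ) (hx : Memℓp (dL x) p)
    (heig : ∀ k, Ufun s r x k = lam * x k) : x = 0 := by
  set t : ℂ := (lam - r) / s with ht
  -- the recurrence
  have h0 : x 1 = t * x 0 := by
    have := heig 0
    simp [Ufun] at this
    rw [ht]; field_simp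
    linear_combination this
  have hrec : ∀ k : ℕ, x (k + 2) = t * x (k + 1) - x k := by
    intro k
    have := heig (k + 1)
    simp only [Ufun, Nat.add_sub_cancel, if_neg (Nat.succ_ne_zero k)] at this
    rw [ht]; field_simp
    linear_combination this
  -- x k = x 0 * cheb t k
  have hform : ∀ k, x k = x 0 * cheb t k := by
    have key : ∀ k, x k = x 0 * cheb t k ∧ x (k+1) = x 0 * cheb t (k+1) := by
      intro k
      induction k with
      | zero => exact ⟨by simp [cheb], by simp [cheb, h0, mul_comm]⟩
      | succ n ih =>
        refine ⟨ih.2, ?_⟩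
        rw [hrec n, ih.1, ih.2]
        show _ = x 0 * cheb t (n+2)
        simp only [cheb]; ring
    exact fun k => (key k).1
  -- it suffices that x 0 = 0
  suffices hx0 : x 0 = 0 by
    funext k
    rw [hform k, hx0, zero_mul]; rfl
  by_contra hx0
  -- dL x tends to zero
  have hq : 0 < p.toReal := ENNReal.toReal_pos (zero_lt_one.trans hp).ne' hp'
  have hsum := hx.summable hq
  have h1 := hsum.tendsto_atTop_zero
  have h2 : Filter.Tendsto (fun k => ‖dL x k‖) atTop (nhds 0) := by
    have h3 := h1.rpow_const (p := 1 / p.toReal) (Or.inr (by positivity))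
    rw [Real.zero_rpow (by positivity)] at h3
    refine h3.congr fun k => ?_
    rw [← Real.rpow_mul (norm_nonneg _), mul_one_div, div_self hq.ne', Real.rpow_one]
  have hD : Filter.Tendsto (dL x) atTop (nhds 0) :=
    tendsto_zero_iff_norm_tendsto_zero.mpr h2
  -- formula for dL x
  have hDf : ∀ k, dL x (k + 1) = x 0 * (cheb t (k+1) - cheb t k) := by
    intro k
    simp only [dL, if_neg (Nat.succ_ne_zero k), Nat.add_sub_cancel, hform k, hform (k+1)]
    ring
  -- roots
  obtain ⟨δ, hδ⟩ := Complex.isAlgClosed.exists_pow_nat_eq (t^2 - 4) zero_lt_two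
  -- general claim for a root with norm ≥ 1
  have claim : ∀ α β : ℂ, α + β = t → α * β = 1 → 1 ≤ ‖α‖ → False := by
    intro α β hsumr hprod hα
    by_cases hne : α = β
    · -- degenerate case: α = β, α² = 1, ‖α‖ = 1
      subst hne
      have hα1 : ‖α‖ = 1 := by
        have : ‖α‖ * ‖α‖ = 1 := by rw [← norm_mul, hprod, norm_one]
        nlinarith [norm_nonneg α]
      refine no_tendsto_zero (c := ‖x 0‖) (norm_pos_iff.mpr hx0) ?_
        (hD.comp (tendsto_add_atTop_nat 1))
      intro k
      have hch : ∀ m : ℕ, cheb t m = (m + 1 : ℂ) * α ^ m := by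
        intro m; rw [← hsumr]; exact cheb_deg hprod m
      have : dL x (k + 1) = x 0 * (((k:ℂ)+2) * α ^ (k+1) - ((k:ℂ)+1) * α ^ k) := by
        rw [hDf k, hch (k+1), hch k]; push_cast; ring
      have hb : ‖x 0‖ ≤ ‖dL x (k+1)‖ := by
        rw [this, norm_mul]
        have h4 : (1:ℝ) ≤ ‖((k:ℂ)+2) * α ^ (k+1) - ((k:ℂ)+1) * α ^ k‖ := by
          have := norm_sub_norm_le (((k:ℂ)+2) * α ^ (k+1)) (((k:ℂ)+1) * α ^ k)
          rw [norm_mul, norm_mul, norm_pow, norm_pow, hα1, one_pow, one_pow,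
            mul_one, mul_one] at this
          have e1 : ‖((k:ℂ)+2)‖ = (k:ℝ)+2 := by
            rw [show ((k:ℂ)+2) = ((k+2:ℕ):ℂ) by push_cast; ring, Complex.norm_natCast]
            push_cast; ring
          have e2 : ‖((k:ℂ)+1)‖ = (k:ℝ)+1 := by
            rw [show ((k:ℂ)+1) = ((k+1:ℕ):ℂ) by push_cast; ring, Complex.norm_natCast]
            push_cast; ring
          rw [e1, e2] at this
          linarith
        calc ‖x 0‖ = ‖x 0‖ * 1 := (mul_one _).symm
          _ ≤ _ := by
            apply mul_le_mul_of_nonneg_left h4 (norm_nonneg _)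
      exact hb
    · -- distinct roots
      have hδne : α - β ≠ 0 := sub_ne_zero.mpr hne
      have hcf : ∀ m : ℕ, (α - β) * cheb t m = α ^ (m+1) - β ^ (m+1) := by
        intro m; rw [← hsumr]; exact cheb_closed hprod m
      have hkey : ∀ k : ℕ, dL x (k + 2) - β * dL x (k + 1)
          = x 0 * (α - 1) * α ^ (k + 1) := by
        intro k
        apply mul_left_cancel₀ hδne
        rw [hDf (k+1), hDf k]
        linear_combination (x 0) * hcf (k+2) - (x 0)*(1+β) * hcf (k+1)
          + (x 0)*β * hcf k
      have hT : Filter.Tendsto (fun k => x 0 * (α - 1) * α ^ (k + 1)) atTop (nhds 0) := by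
        have hT1 : Filter.Tendsto (fun k => dL x (k + 2) - β * dL x (k + 1))
            atTop (nhds 0) := by
          have := (hD.comp (tendsto_add_atTop_nat 2)).sub
            ((hD.comp (tendsto_add_atTop_nat 1)).const_mul β)
          simpa using this
        exact hT1.congr hkey
      have hα1 : α = 1 := by
        by_contra hαn
        refine no_tendsto_zero (c := ‖x 0 * (α - 1)‖) ?_ ?_ hT
        · exact norm_pos_iff.mpr (mul_ne_zero hx0 (sub_ne_zero.mpr hαn))
        · intro k
          have e : ‖x 0 * (α - 1) * α ^ (k+1)‖ = ‖x 0 * (α-1)‖ * ‖α‖^(k+1) := by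
            rw [norm_mul, norm_pow]
          rw [e]
          nlinarith [one_le_pow₀ hα (n := k+1), norm_nonneg (x 0 * (α-1))]
      apply hne
      rw [hα1]
      rw [hα1, one_mul] at hprod
      exact hprod.symm
  -- apply the claim to whichever root has norm ≥ 1
  set α := (t + δ) / 2 with hA
  set β := (t - δ) / 2 with hB
  have hsum2 : α + β = t := by rw [hA, hB]; ring
  have hprod2 : α * β = 1 := by
    rw [hA, hB]
    have : δ ^ 2 = t ^ 2 - 4 := hδ
    linear_combination (-1/4 : ℂ) * this
  have hnorm : 1 ≤ ‖α‖ ∨ 1 ≤ ‖β‖ := by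
    by_contra hcon
    push_neg at hcon
    have : ‖α‖ * ‖β‖ = 1 := by rw [← norm_mul, hprod2, norm_one]
    nlinarith [norm_nonneg α, norm_nonneg β, hcon.1, hcon.2]
  rcases hnorm with h | h
  · exact claim α β hsum2 hprod2 h
  · exact claim β α (by rw [← hsum2]; ring) (by rw [← hprod2]; ring) h
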